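/- arXiv:1602.06532 — 3 statements merged into one kernel-verified Lean document; each statement's English description precedes it below -/
import Mathlib

section
/- (Laplace's method) Let a < b be real numbers and h : ℝ → ℝ be a C² function on the open interval (a,b). Suppose c ∈ (a,b) satisfies h'(c) = 0 and h''(c) < 0, and that c is the unique maximum of h in the strong sense that for every δ > 0 the supremum of h over {t ∈ (a,b) : |t − c| ≥ δ} is strictly less than h(c). Then ∫_a^b e^{λ h(t)} dt is asymptotic to e^{λ h(c)} · (−2π/(λ h''(c)))^{1/2} as λ → ∞; that is, the ratio of the integral to e^{λ h(c)} √(−2π/(λ h''(c))) tends to 1 as λ → +∞. -/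
open Filter Real Set MeasureTheory

lemma my_sqrt_atTop : Tendsto Real.sqrt atTop atTop :=
  tendsto_atTop_atTop.2 fun M => ⟨M ^ 2, fun x hx => by
    nlinarith [Real.sqrt_le_sqrt hx, Real.sqrt_sq_eq_abs M, le_abs_self M, Real.sqrt_nonneg x,
      Real.sq_sqrt (le_trans (sq_nonneg M) hx)]⟩

lemma gauss_core {s δ : ℝ} (hs : 0 < s) (hδ : 0 < δ) :
    Tendsto (fun lam : ℝ =>
        Real.sqrt (lam * s / π) * ∫ x in (-δ)..δ, Real.exp (-(lam * s) * x ^ 2))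
      atTop (nhds 1) := by
  have hπ : (0:ℝ) < π := Real.pi_pos
  have hint : Integrable (fun u : ℝ => Real.exp (-(1:ℝ) * u ^ 2)) := integrable_exp_neg_mul_sq one_pos
  have hend : Tendsto (fun lam : ℝ => δ * Real.sqrt (lam * s)) atTop atTop := by
    apply Tendsto.const_mul_atTop hδ
    exact my_sqrt_atTop.comp (Tendsto.atTop_mul_const hs tendsto_id)
  have hlim : Tendsto (fun lam : ℝ => (Real.sqrt π)⁻¹ *
      ∫ u in (-(δ * Real.sqrt (lam * s)))..(δ * Real.sqrt (lam * s)), Real.exp (-(1:ℝ) * u ^ 2))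
      atTop (nhds ((Real.sqrt π)⁻¹ * ∫ u : ℝ, Real.exp (-(1:ℝ) * u ^ 2))) := by
    exact Tendsto.const_mul _ (intervalIntegral_tendsto_integral hint (tendsto_neg_atBot_iff.2 hend) hend)
  have hval : (Real.sqrt π)⁻¹ * ∫ u : ℝ, Real.exp (-(1:ℝ) * u ^ 2) = 1 := by
    rw [integral_gaussian, div_one, inv_mul_cancel₀ (ne_of_gt (Real.sqrt_pos.2 hπ))]
  rw [hval] at hlim
  apply hlim.congr'
  filter_upwards [eventually_gt_atTop (0:ℝ)] with lam hlam
  have hm : 0 < Real.sqrt (lam * s) := Real.sqrt_pos.2 (mul_pos hlam hs)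
  set m := Real.sqrt (lam * s) with hmdef
  have hm2 : m ^ 2 = lam * s := Real.sq_sqrt (mul_pos hlam hs).le
  have h1 : (fun x : ℝ => Real.exp (-(lam * s) * x ^ 2)) = fun x => Real.exp (-(1:ℝ) * (m * x) ^ 2) := by
    funext x; rw [mul_pow, hm2]; ring_nf
  rw [h1, intervalIntegral.integral_comp_mul_left (fun u => Real.exp (-(1:ℝ) * u ^ 2)) hm.ne',
    smul_eq_mul]
  have : Real.sqrt (lam * s / π) = m / Real.sqrt π := Real.sqrt_div (mul_pos hlam hs).le π
  rw [this]
  rw [show m * -δ = -(δ * m) by ring, show m * δ = δ * m by ring]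
  field_simp


lemma double_mvt {a b : ℝ} {h : ℝ → ℝ} (hreg : ContDiffOn ℝ 2 h (Set.Ioo a b))
    {c t : ℝ} (hc : c ∈ Set.Ioo a b) (ht : t ∈ Set.Ioo a b) (hne : t ≠ c)
    (hc' : deriv h c = 0) :
    ∃ η ∈ Set.Ioo a b, |η - c| ≤ |t - c| ∧
      h t - h c = deriv (deriv h) η * (t - c) ^ 2 / 2 := by
  have hop : IsOpen (Set.Ioo a b) := isOpen_Ioo
  have hd1 : ∀ x ∈ Set.Ioo a b, HasDerivAt h (deriv h x) x := fun x hx =>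
    ((hreg.contDiffAt (hop.mem_nhds hx)).differentiableAt (by norm_num)).hasDerivAt
  have hC1 : ContDiffOn ℝ 1 (deriv h) (Set.Ioo a b) :=
    hreg.deriv_of_isOpen hop (by norm_num : (1 : WithTop ℕ∞) + 1 ≤ 2)
  have hd2 : ∀ x ∈ Set.Ioo a b, HasDerivAt (deriv h) (deriv (deriv h) x) x := fun x hx =>
    ((hC1.contDiffAt (hop.mem_nhds hx)).differentiableAt one_ne_zero).hasDerivAt
  have hgd : ∀ x : ℝ, HasDerivAt (fun y : ℝ => (y - c) ^ 2) (2 * (x - c)) x := by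
    intro x
    have := ((hasDerivAt_id x).sub_const c).fun_pow 2
    simpa [mul_comm] using this
  have hgcont : ContinuousOn (fun y : ℝ => (y - c) ^ 2) (Set.univ) :=
    ((continuous_id.sub continuous_const).pow 2).continuousOn
  rcases lt_or_gt_of_ne hne with hlt | hgt
  · -- t < c
    have hsub : Set.Icc t c ⊆ Set.Ioo a b := Set.Icc_subset_Ioo ht.1 hc.2
    obtain ⟨ξ, hξ, hξeq⟩ :=
      exists_ratio_hasDerivAt_eq_ratio_slope h (deriv h) hlt
        ((hreg.continuousOn).mono hsub)
        (fun x hx => hd1 x (hsub (Set.mem_Icc_of_Ioo hx)))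
        (fun y => (y - c) ^ 2) (fun x => 2 * (x - c))
        (hgcont.mono (Set.subset_univ _))
        (fun x _ => hgd x)
    have hξmem : ξ ∈ Set.Ioo a b := hsub (Set.mem_Icc_of_Ioo hξ)
    have hsub2 : Set.Icc ξ c ⊆ Set.Ioo a b := Set.Icc_subset_Ioo hξmem.1 hc.2
    obtain ⟨η, hη, hηeq⟩ :=
      exists_hasDerivAt_eq_slope (deriv h) (deriv (deriv h)) hξ.2
        ((hC1.continuousOn).mono hsub2)
        (fun x hx => hd2 x (hsub2 (Set.mem_Icc_of_Ioo hx)))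
    have hηmem : η ∈ Set.Ioo a b := hsub2 (Set.mem_Icc_of_Ioo hη)
    refine ⟨η, hηmem, ?_, ?_⟩
    · have h1 : t < η := lt_trans hξ.1 hη.1
      rw [abs_of_nonpos (by linarith [hη.2] : η - c ≤ 0),
        abs_of_nonpos (by linarith : t - c ≤ 0)]
      linarith
    · have hcξ : c - ξ ≠ 0 := sub_ne_zero.2 (ne_of_gt hξ.2)
      rw [hc'] at hηeq
      have hval : (0 : ℝ) - deriv h ξ = deriv (deriv h) η * (c - ξ) :=
        (div_eq_iff hcξ).1 hηeq.symm
      have hdξ : deriv h ξ = deriv (deriv h) η * (ξ - c) := by linear_combination -hval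
      rw [hdξ] at hξeq
      have h2 : (ξ - c) * (-(t - c) ^ 2 * deriv (deriv h) η - (h c - h t) * 2) = 0 := by
        linear_combination hξeq
      have h3 := (mul_eq_zero.1 h2).resolve_left (sub_ne_zero.2 (ne_of_lt hξ.2))
      linear_combination h3 / 2
  · -- c < t
    have hsub : Set.Icc c t ⊆ Set.Ioo a b := Set.Icc_subset_Ioo hc.1 ht.2
    obtain ⟨ξ, hξ, hξeq⟩ :=
      exists_ratio_hasDerivAt_eq_ratio_slope h (deriv h) hgt
        ((hreg.continuousOn).mono hsub)
        (fun x hx => hd1 x (hsub (Set.mem_Icc_of_Ioo hx)))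
        (fun y => (y - c) ^ 2) (fun x => 2 * (x - c))
        (hgcont.mono (Set.subset_univ _))
        (fun x _ => hgd x)
    have hξmem : ξ ∈ Set.Ioo a b := hsub (Set.mem_Icc_of_Ioo hξ)
    have hsub2 : Set.Icc c ξ ⊆ Set.Ioo a b := Set.Icc_subset_Ioo hc.1 hξmem.2
    obtain ⟨η, hη, hηeq⟩ :=
      exists_hasDerivAt_eq_slope (deriv h) (deriv (deriv h)) hξ.1
        ((hC1.continuousOn).mono hsub2)
        (fun x hx => hd2 x (hsub2 (Set.mem_Icc_of_Ioo hx)))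
    have hηmem : η ∈ Set.Ioo a b := hsub2 (Set.mem_Icc_of_Ioo hη)
    refine ⟨η, hηmem, ?_, ?_⟩
    · have h1 : η < t := lt_trans hη.2 hξ.2
      rw [abs_of_nonneg (by linarith [hη.1] : (0:ℝ) ≤ η - c),
        abs_of_nonneg (by linarith : (0:ℝ) ≤ t - c)]
      linarith
    · have hξc : ξ - c ≠ 0 := sub_ne_zero.2 (ne_of_gt hξ.1)
      rw [hc'] at hηeq
      have hval : deriv h ξ - 0 = deriv (deriv h) η * (ξ - c) :=
        (div_eq_iff hξc).1 hηeq.symm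
      have hdξ : deriv h ξ = deriv (deriv h) η * (ξ - c) := by linear_combination hval
      rw [hdξ] at hξeq
      have h2 : (ξ - c) * ((t - c) ^ 2 * deriv (deriv h) η - (h t - h c) * 2) = 0 := by
        linear_combination hξeq
      have h3 := (mul_eq_zero.1 h2).resolve_left hξc
      linear_combination -h3 / 2



/-- **Laplace's method.** Let `h` be a real-valued `C²` function on a bounded
interval `(a, b)`, with a unique maximum at an interior point `c` (in the strong
sense that for every `δ > 0` the supremum of `h` over the points of `(a, b)` at
distance at least `δ` from `c` is strictly less than `h c`), with `h'(c) = 0`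
and `h''(c) < 0`.  Then `∫_a^b e^{λ h(t)} dt ~ e^{λ h(c)} √(-2π/(λ h''(c)))`
as `λ → ∞`. -/
theorem laplace_method (a b : ℝ) (hab : a < b) (h : ℝ → ℝ)
    (hreg : ContDiffOn ℝ 2 h (Set.Ioo a b))
    (c : ℝ) (hc : c ∈ Set.Ioo a b)
    (hc' : deriv h c = 0) (hc'' : deriv (deriv h) c < 0)
    (hmax : ∀ δ > 0, ∃ M, M < h c ∧ ∀ t ∈ Set.Ioo a b, δ ≤ |t - c| → h t ≤ M) :
    Tendsto (fun lam : ℝ =>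
        (∫ t in Set.Ioo a b, Real.exp (lam * h t)) /
          (Real.exp (lam * h c) * Real.sqrt (-(2 * Real.pi) / (lam * deriv (deriv h) c))))
      atTop (nhds 1) := by
  set K : ℝ := -(deriv (deriv h) c) with hKdef
  have hKpos : 0 < K := by rw [hKdef]; linarith
  have hπ : (0:ℝ) < π := Real.pi_pos
  have hvolne : volume (Set.Ioo a b) ≠ ⊤ := by
    rw [Real.volume_Ioo]; exact ENNReal.ofReal_ne_top
  -- h t ≤ h c on (a,b)
  have hle : ∀ t ∈ Set.Ioo a b, h t ≤ h c := by
    intro t ht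
    by_cases htc : t = c
    · exact le_of_eq (by rw [htc])
    · obtain ⟨M, hM, hMb⟩ := hmax |t - c| (abs_pos.2 (sub_ne_zero.2 htc))
      exact (hMb t ht le_rfl).trans hM.le
  -- integrability of the normalized integrand
  have hmeas : ∀ lam : ℝ, AEStronglyMeasurable (fun t => Real.exp (lam * (h t - h c)))
      (volume.restrict (Set.Ioo a b)) := by
    intro lam
    exact (Real.continuous_exp.comp_continuousOn
      (continuousOn_const.mul (hreg.continuousOn.sub continuousOn_const))).aestronglyMeasurable
      measurableSet_Ioo
  have hInt : ∀ lam : ℝ, 0 ≤ lam →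
      IntegrableOn (fun t => Real.exp (lam * (h t - h c))) (Set.Ioo a b) volume := by
    intro lam hlam
    refine ⟨hmeas lam, HasFiniteIntegral.restrict_of_bounded (C := 1) hvolne.lt_top ?_⟩
    rw [ae_restrict_iff' measurableSet_Ioo]
    refine Eventually.of_forall fun t ht => ?_
    rw [Real.norm_eq_abs, abs_of_pos (Real.exp_pos _)]
    exact Real.exp_le_one_iff.2 (mul_nonpos_of_nonneg_of_nonpos hlam
      (sub_nonpos.2 (hle t ht)))
  -- Gaussian facts
  have hGint : ∀ p : ℝ, 0 < p → Integrable (fun t : ℝ => Real.exp (-p * (t - c) ^ 2)) :=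
    fun p hp => (integrable_exp_neg_mul_sq hp).comp_sub_right c
  have hGfull : ∀ p : ℝ, 0 < p →
      (∫ t : ℝ, Real.exp (-p * (t - c) ^ 2)) = Real.sqrt (π / p) := by
    intro p hp
    rw [← integral_gaussian p]
    exact integral_sub_right_eq_self (fun x => Real.exp (-p * x ^ 2)) c
  -- Taylor-type two-sided bound
  have taylor : ∀ ε : ℝ, 0 < ε → ∃ δ : ℝ, 0 < δ ∧
      Set.Icc (c - δ) (c + δ) ⊆ Set.Ioo a b ∧
      ∀ t ∈ Set.Icc (c - δ) (c + δ),
        -((K + ε) / 2) * (t - c) ^ 2 ≤ h t - h c ∧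
        h t - h c ≤ -((K - ε) / 2) * (t - c) ^ 2 := by
    intro ε hε
    have hψcont : ContinuousAt (deriv (deriv h)) c := by
      have hC1 : ContDiffOn ℝ 1 (deriv h) (Set.Ioo a b) :=
        hreg.deriv_of_isOpen isOpen_Ioo (by norm_num : (1 : WithTop ℕ∞) + 1 ≤ 2)
      exact (hC1.continuousOn_deriv_of_isOpen isOpen_Ioo (le_refl 1)).continuousAt
        (isOpen_Ioo.mem_nhds hc)
    obtain ⟨δ0, hδ0, hδ0p⟩ := Metric.continuousAt_iff.1 hψcont ε hε
    obtain ⟨δ1, hδ1, hδ1p⟩ := Metric.isOpen_iff.1 isOpen_Ioo c hc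
    refine ⟨min δ0 δ1 / 2, by positivity, ?_, ?_⟩
    · intro t htmem
      apply hδ1p
      rw [Metric.mem_ball, Real.dist_eq, abs_sub_lt_iff]
      have h1 := htmem.1; have h2 := htmem.2
      have := min_le_right δ0 δ1
      constructor <;> linarith
    · intro t htmem
      have h1 := htmem.1; have h2 := htmem.2
      by_cases htc : t = c
      · subst htc; simp
      · have htIoo : t ∈ Set.Ioo a b := by
          apply hδ1p
          rw [Metric.mem_ball, Real.dist_eq, abs_sub_lt_iff]
          have := min_le_right δ0 δ1
          constructor <;> linarith
        obtain ⟨η, hηmem, hηd, hηeq⟩ := double_mvt hreg hc htIoo htc hc'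
        have hdist : dist η c < δ0 := by
          rw [Real.dist_eq]
          have htd : |t - c| ≤ min δ0 δ1 / 2 := by
            rw [abs_le]; constructor <;> linarith
          have := min_le_left δ0 δ1
          linarith [hηd, htd]
        have habs := hδ0p hdist
        rw [Real.dist_eq] at habs
        have hψc : deriv (deriv h) c = -K := by rw [hKdef]; ring
        rw [hψc] at habs
        rw [abs_lt] at habs
        constructor
        · rw [hηeq]
          nlinarith [mul_nonneg (by linarith : (0:ℝ) ≤ deriv (deriv h) η + K + ε)
            (sq_nonneg (t - c))]
        · rw [hηeq]
          nlinarith [mul_nonneg (by linarith : (0:ℝ) ≤ -K + ε - deriv (deriv h) η)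
            (sq_nonneg (t - c))]
  set r : ℝ → ℝ := fun lam =>
    Real.sqrt (lam * K / (2 * π)) * ∫ t in Set.Ioo a b, Real.exp (lam * (h t - h c)) with hr
  -- upper bound
  have upper : ∀ ε : ℝ, 0 < ε → ε < K →
      ∀ᶠ lam in atTop, r lam ≤ Real.sqrt (K / (K - ε)) + ε := by
    intro ε hε hεK
    obtain ⟨δ, hδ, hsub, htb⟩ := taylor ε hε
    obtain ⟨M, hM, hMb⟩ := hmax δ hδ
    set m := h c - M with hm
    have hmpos : 0 < m := by rw [hm]; linarith
    have hI1sub : Set.Ioo (c - δ) (c + δ) ⊆ Set.Ioo a b :=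
      Set.Subset.trans Set.Ioo_subset_Icc_self hsub
    have tail0 : Tendsto (fun lam : ℝ =>
        Real.sqrt (lam * K / (2 * π)) * ((b - a) * Real.exp (-m * lam))) atTop (nhds 0) := by
      have h0 := tendsto_rpow_mul_exp_neg_mul_atTop_nhds_zero (1/2) m hmpos
      have h1 := h0.const_mul ((b - a) * Real.sqrt (K / (2 * π)))
      rw [mul_zero] at h1
      apply h1.congr'
      filter_upwards [eventually_ge_atTop (0:ℝ)] with lam hlam
      rw [show lam * K / (2 * π) = lam * (K / (2 * π)) by ring, Real.sqrt_mul hlam,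
        ← Real.sqrt_eq_rpow]
      ring
    filter_upwards [eventually_gt_atTop (0:ℝ), tail0.eventually_le_const hε]
      with lam hlam htail
    have hintg := hInt lam hlam.le
    have hp : 0 < lam * ((K - ε) / 2) := mul_pos hlam (by linarith)
    have hmeasdiff : MeasurableSet (Set.Ioo a b \ Set.Ioo (c - δ) (c + δ)) :=
      measurableSet_Ioo.diff measurableSet_Ioo
    have bound1 : (∫ t in Set.Ioo (c - δ) (c + δ), Real.exp (lam * (h t - h c))) ≤
        ∫ t in Set.Ioo (c - δ) (c + δ), Real.exp (-(lam * ((K - ε) / 2)) * (t - c) ^ 2) := by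
      apply setIntegral_mono_on (hintg.mono_set hI1sub)
        ((hGint _ hp).integrableOn) measurableSet_Ioo
      intro t ht
      apply Real.exp_le_exp.2
      have h2 := (htb t (Set.Ioo_subset_Icc_self ht)).2
      calc lam * (h t - h c) ≤ lam * (-((K - ε) / 2) * (t - c) ^ 2) :=
            mul_le_mul_of_nonneg_left h2 hlam.le
        _ = -(lam * ((K - ε) / 2)) * (t - c) ^ 2 := by ring
    have bound2 : (∫ t in Set.Ioo (c - δ) (c + δ),
        Real.exp (-(lam * ((K - ε) / 2)) * (t - c) ^ 2)) ≤
        Real.sqrt (π / (lam * ((K - ε) / 2))) := by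
      rw [← hGfull _ hp]
      exact setIntegral_le_integral (hGint _ hp)
        (Eventually.of_forall fun x => (Real.exp_pos _).le)
    have bound3 : (∫ t in Set.Ioo a b \ Set.Ioo (c - δ) (c + δ),
        Real.exp (lam * (h t - h c))) ≤ (b - a) * Real.exp (-m * lam) := by
      have step1 : (∫ t in Set.Ioo a b \ Set.Ioo (c - δ) (c + δ),
          Real.exp (lam * (h t - h c))) ≤
          ∫ _ in Set.Ioo a b \ Set.Ioo (c - δ) (c + δ), Real.exp (-m * lam) := by
        apply setIntegral_mono_on (hintg.mono_set Set.diff_subset)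
          (integrableOn_const (ne_top_of_le_ne_top hvolne
            (measure_mono Set.diff_subset))) hmeasdiff
        intro t ht
        apply Real.exp_le_exp.2
        have hdist : δ ≤ |t - c| := by
          by_contra hcon
          push_neg at hcon
          rw [abs_lt] at hcon
          exact ht.2 ⟨by linarith [hcon.1], by linarith [hcon.2]⟩
        have hhtM : h t ≤ M := hMb t ht.1 hdist
        calc lam * (h t - h c) ≤ lam * (-m) :=
              mul_le_mul_of_nonneg_left (by rw [hm]; linarith) hlam.le
          _ = -m * lam := by ring
      have step2 : (∫ _ in Set.Ioo a b \ Set.Ioo (c - δ) (c + δ),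
          Real.exp (-m * lam)) ≤ (b - a) * Real.exp (-m * lam) := by
        rw [setIntegral_const, smul_eq_mul]
        apply mul_le_mul_of_nonneg_right _ (Real.exp_pos _).le
        calc (volume (Set.Ioo a b \ Set.Ioo (c - δ) (c + δ))).toReal
            ≤ (volume (Set.Ioo a b)).toReal :=
              ENNReal.toReal_mono hvolne (measure_mono Set.diff_subset)
          _ = b - a := by rw [Real.volume_Ioo, ENNReal.toReal_ofReal (by linarith)]
      exact step1.trans step2
    have split : (∫ t in Set.Ioo a b, Real.exp (lam * (h t - h c))) =
        (∫ t in Set.Ioo (c - δ) (c + δ), Real.exp (lam * (h t - h c))) +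
        ∫ t in Set.Ioo a b \ Set.Ioo (c - δ) (c + δ), Real.exp (lam * (h t - h c)) := by
      have := integral_diff measurableSet_Ioo hintg hI1sub
        (f := fun t => Real.exp (lam * (h t - h c)))
      linarith [this]
    have hid : Real.sqrt (lam * K / (2 * π)) * Real.sqrt (π / (lam * ((K - ε) / 2))) =
        Real.sqrt (K / (K - ε)) := by
      rw [← Real.sqrt_mul (by positivity)]
      congr 1
      have hKε : K - ε ≠ 0 := by linarith
      field_simp
    have hsq : (0:ℝ) ≤ Real.sqrt (lam * K / (2 * π)) := Real.sqrt_nonneg _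
    calc r lam = Real.sqrt (lam * K / (2 * π)) *
          ((∫ t in Set.Ioo (c - δ) (c + δ), Real.exp (lam * (h t - h c))) +
          ∫ t in Set.Ioo a b \ Set.Ioo (c - δ) (c + δ), Real.exp (lam * (h t - h c))) := by
          rw [hr]; simp only []; rw [split]
      _ ≤ Real.sqrt (lam * K / (2 * π)) * Real.sqrt (π / (lam * ((K - ε) / 2))) +
          Real.sqrt (lam * K / (2 * π)) * ((b - a) * Real.exp (-m * lam)) := by
          rw [mul_add]
          exact add_le_add (mul_le_mul_of_nonneg_left (bound1.trans bound2) hsq)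
            (mul_le_mul_of_nonneg_left bound3 hsq)
      _ ≤ Real.sqrt (K / (K - ε)) + ε := add_le_add (le_of_eq hid) htail
  -- lower bound
  have lower : ∀ ε : ℝ, 0 < ε →
      ∀ᶠ lam in atTop, Real.sqrt (K / (K + ε)) * (1 - ε) ≤ r lam := by
    intro ε hε
    obtain ⟨δ, hδ, hsub, htb⟩ := taylor ε hε
    have hI1sub : Set.Ioo (c - δ) (c + δ) ⊆ Set.Ioo a b :=
      Set.Subset.trans Set.Ioo_subset_Icc_self hsub
    have hs : (0:ℝ) < (K + ε) / 2 := by linarith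
    filter_upwards [eventually_gt_atTop (0:ℝ),
      (gauss_core hs hδ).eventually_const_le (by linarith : 1 - ε < 1)]
      with lam hlam hgc
    have hintg := hInt lam hlam.le
    have hp : 0 < lam * ((K + ε) / 2) := mul_pos hlam hs
    have hmeasdiff : MeasurableSet (Set.Ioo a b \ Set.Ioo (c - δ) (c + δ)) :=
      measurableSet_Ioo.diff measurableSet_Ioo
    have bound1 : (∫ t in Set.Ioo (c - δ) (c + δ),
        Real.exp (-(lam * ((K + ε) / 2)) * (t - c) ^ 2)) ≤
        ∫ t in Set.Ioo (c - δ) (c + δ), Real.exp (lam * (h t - h c)) := by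
      apply setIntegral_mono_on ((hGint _ hp).integrableOn)
        (hintg.mono_set hI1sub) measurableSet_Ioo
      intro t ht
      apply Real.exp_le_exp.2
      have h2 := (htb t (Set.Ioo_subset_Icc_self ht)).1
      calc -(lam * ((K + ε) / 2)) * (t - c) ^ 2 = lam * (-((K + ε) / 2) * (t - c) ^ 2) := by
            ring
        _ ≤ lam * (h t - h c) := mul_le_mul_of_nonneg_left h2 hlam.le
    have bound0 : (0:ℝ) ≤ ∫ t in Set.Ioo a b \ Set.Ioo (c - δ) (c + δ),
        Real.exp (lam * (h t - h c)) :=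
      setIntegral_nonneg hmeasdiff fun t _ => (Real.exp_pos _).le
    have split : (∫ t in Set.Ioo a b, Real.exp (lam * (h t - h c))) =
        (∫ t in Set.Ioo (c - δ) (c + δ), Real.exp (lam * (h t - h c))) +
        ∫ t in Set.Ioo a b \ Set.Ioo (c - δ) (c + δ), Real.exp (lam * (h t - h c)) := by
      have := integral_diff measurableSet_Ioo hintg hI1sub
        (f := fun t => Real.exp (lam * (h t - h c)))
      linarith [this]
    have hconv : (∫ t in Set.Ioo (c - δ) (c + δ),
        Real.exp (-(lam * ((K + ε) / 2)) * (t - c) ^ 2)) =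
        ∫ x in (-δ)..δ, Real.exp (-(lam * ((K + ε) / 2)) * x ^ 2) := by
      rw [← MeasureTheory.integral_Ioc_eq_integral_Ioo,
        ← intervalIntegral.integral_of_le (by linarith : c - δ ≤ c + δ)]
      rw [intervalIntegral.integral_comp_sub_right
        (fun x => Real.exp (-(lam * ((K + ε) / 2)) * x ^ 2)) c]
      rw [show c - δ - c = -δ by ring, show c + δ - c = δ by ring]
    have hid : Real.sqrt (lam * K / (2 * π)) =
        Real.sqrt (K / (K + ε)) * Real.sqrt (lam * ((K + ε) / 2) / π) := by
      rw [← Real.sqrt_mul (by positivity)]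
      congr 1
      have hKε : K + ε ≠ 0 := by linarith
      field_simp
    have hsq : (0:ℝ) ≤ Real.sqrt (K / (K + ε)) := Real.sqrt_nonneg _
    calc Real.sqrt (K / (K + ε)) * (1 - ε)
        ≤ Real.sqrt (K / (K + ε)) * (Real.sqrt (lam * ((K + ε) / 2) / π) *
          ∫ x in (-δ)..δ, Real.exp (-(lam * ((K + ε) / 2)) * x ^ 2)) :=
          mul_le_mul_of_nonneg_left hgc hsq
      _ = Real.sqrt (lam * K / (2 * π)) * ∫ t in Set.Ioo (c - δ) (c + δ),
          Real.exp (-(lam * ((K + ε) / 2)) * (t - c) ^ 2) := by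
          rw [hconv, hid, mul_assoc]
      _ ≤ r lam := by
          rw [hr]; simp only []
          apply mul_le_mul_of_nonneg_left _ (Real.sqrt_nonneg _)
          rw [split]
          linarith [bound1, bound0]
  -- conclude tendsto of r
  have hrtend : Tendsto r atTop (nhds 1) := by
    rw [tendsto_order]
    constructor
    · intro x hx
      have cont : Tendsto (fun ε : ℝ => Real.sqrt (K / (K + ε)) * (1 - ε)) (nhdsWithin 0 (Set.Ioi 0)) (nhds 1) := by
        have hca : ContinuousAt (fun ε : ℝ => Real.sqrt (K / (K + ε)) * (1 - ε)) 0 := by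
          apply ContinuousAt.mul
          · apply Real.continuous_sqrt.continuousAt.comp
            exact ContinuousAt.div continuousAt_const
              (continuousAt_const.add continuousAt_id) (by simpa using hKpos.ne')
          · exact continuousAt_const.sub continuousAt_id
        have h0 := hca.tendsto.mono_left (nhdsWithin_le_nhds : nhdsWithin (0:ℝ) (Set.Ioi 0) ≤ nhds 0)
        have hval : Real.sqrt (K / (K + 0)) * (1 - 0) = 1 := by
          rw [add_zero, div_self hKpos.ne', Real.sqrt_one]; ring
        rwa [hval] at h0
      have hmem : Set.Ioo (0:ℝ) 1 ∈ nhdsWithin (0:ℝ) (Set.Ioi 0) :=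
        Ioo_mem_nhdsGT_of_mem ⟨le_refl 0, zero_lt_one⟩
      obtain ⟨ε, hεlt, hεI⟩ := ((cont.eventually_const_lt hx).and hmem).exists
      filter_upwards [lower ε hεI.1] with lam hlam
      exact lt_of_lt_of_le hεlt hlam
    · intro y hy
      have cont : Tendsto (fun ε : ℝ => Real.sqrt (K / (K - ε)) + ε) (nhdsWithin 0 (Set.Ioi 0)) (nhds 1) := by
        have hca : ContinuousAt (fun ε : ℝ => Real.sqrt (K / (K - ε)) + ε) 0 := by
          apply ContinuousAt.add _ continuousAt_id
          apply Real.continuous_sqrt.continuousAt.comp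
          exact ContinuousAt.div continuousAt_const
            (continuousAt_const.sub continuousAt_id) (by simpa using hKpos.ne')
        have h0 := hca.tendsto.mono_left (nhdsWithin_le_nhds : nhdsWithin (0:ℝ) (Set.Ioi 0) ≤ nhds 0)
        have hval : Real.sqrt (K / (K - 0)) + 0 = 1 := by
          rw [sub_zero, div_self hKpos.ne', Real.sqrt_one]; ring
        rwa [hval] at h0
      have hmem : Set.Ioo (0:ℝ) K ∈ nhdsWithin (0:ℝ) (Set.Ioi 0) :=
        Ioo_mem_nhdsGT_of_mem ⟨le_refl 0, hKpos⟩
      obtain ⟨ε, hεlt, hεI⟩ := ((cont.eventually_lt_const hy).and hmem).exists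
      filter_upwards [upper ε hεI.1 hεI.2] with lam hlam
      exact lt_of_le_of_lt hlam hεlt
  -- transfer to the stated ratio
  apply hrtend.congr'
  filter_upwards [eventually_gt_atTop (0:ℝ)] with lam hlam
  have hlK : 0 < lam * K := mul_pos hlam hKpos
  have hnum : (∫ t in Set.Ioo a b, Real.exp (lam * h t)) =
      Real.exp (lam * h c) * ∫ t in Set.Ioo a b, Real.exp (lam * (h t - h c)) := by
    rw [← integral_const_mul]
    refine setIntegral_congr_fun measurableSet_Ioo fun t _ => ?_
    show Real.exp (lam * h t) = Real.exp (lam * h c) * Real.exp (lam * (h t - h c))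
    rw [show lam * h t = lam * h c + lam * (h t - h c) by ring, Real.exp_add]
  have hψc : deriv (deriv h) c = -K := by rw [hKdef]; ring
  simp only [hr]
  rw [hnum, hψc, show lam * -K = -(lam * K) by ring, neg_div_neg_eq,
    show 2 * π / (lam * K) = (lam * K / (2 * π))⁻¹ by rw [inv_div],
    Real.sqrt_inv, mul_div_mul_left _ _ (Real.exp_ne_zero (lam * h c)), div_inv_eq_mul]
  ring
end

section
/- Let m ≥ 1 and k be integers and let a > 0 be a real number. For each positive integer n, set S_n := Σ_{l ∈ ℤ, (ml+k)² ≤ 4n} exp(a√n · √(1 − (ml+k)²/(4n))) and J_n := ∫_{−1}^{1} exp(a√n · √(1 − t²)) dt. Then (m/(2√n)) · S_n is asymptotic to J_n as n → ∞; that is, the ratio ((m/(2√n)) S_n)/J_n tends to 1. -/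
open Filter Real Set MeasureTheory

namespace RSAux

/-- The integrand, extended by zero outside `[-1,1]`. -/
noncomputable def g (c : ℝ) (t : ℝ) : ℝ :=
  if t ^ 2 ≤ 1 then Real.exp (c * Real.sqrt (1 - t ^ 2)) else 0

lemma g_nonneg (c t : ℝ) : 0 ≤ g c t := by
  unfold g; split
  · positivity
  · exact le_refl 0

lemma g_le (c : ℝ) (hc : 0 ≤ c) (t : ℝ) : g c t ≤ Real.exp c := by
  unfold g; split
  · apply Real.exp_le_exp.2
    have h1 : Real.sqrt (1 - t ^ 2) ≤ 1 := Real.sqrt_le_one.2 (by nlinarith)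
    nlinarith
  · positivity

lemma g_antitoneOn (c : ℝ) (hc : 0 ≤ c) : AntitoneOn (g c) (Ici 0) := by
  intro t1 h1 t2 h2 h12
  simp only [mem_Ici] at h1 h2
  unfold g
  by_cases ht2 : t2 ^ 2 ≤ 1
  · have ht1 : t1 ^ 2 ≤ 1 := by nlinarith
    rw [if_pos ht1, if_pos ht2]
    apply Real.exp_le_exp.2
    have := Real.sqrt_le_sqrt (show 1 - t2 ^ 2 ≤ 1 - t1 ^ 2 by nlinarith)
    nlinarith
  · rw [if_neg ht2]
    split
    · positivity
    · exact le_refl 0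

lemma g_monotoneOn (c : ℝ) (hc : 0 ≤ c) : MonotoneOn (g c) (Iic 0) := by
  intro t1 h1 t2 h2 h12
  simp only [mem_Iic] at h1 h2
  unfold g
  by_cases ht1 : t1 ^ 2 ≤ 1
  · have ht2 : t2 ^ 2 ≤ 1 := by nlinarith
    rw [if_pos ht1, if_pos ht2]
    apply Real.exp_le_exp.2
    have := Real.sqrt_le_sqrt (show 1 - t1 ^ 2 ≤ 1 - t2 ^ 2 by nlinarith)
    nlinarith
  · rw [if_neg ht1]
    split
    · positivity
    · exact le_refl 0

lemma g_measurable (c : ℝ) : Measurable (g c) := by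
  unfold g
  apply Measurable.ite
  · exact measurableSet_le (by fun_prop) measurable_const
  · fun_prop
  · exact measurable_const

lemma g_intervalIntegrable (c : ℝ) (hc : 0 ≤ c) (p q : ℝ) :
    IntervalIntegrable (g c) volume p q := by
  rw [intervalIntegrable_iff]
  apply Integrable.mono' (g := fun _ : ℝ => Real.exp c)
  · exact integrableOn_const measure_Ioc_lt_top.ne
  · exact (g_measurable c).aestronglyMeasurable.restrict
  · refine Filter.Eventually.of_forall fun x => ?_
    rw [Real.norm_eq_abs, abs_of_nonneg (g_nonneg c x)]
    exact g_le c hc x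

lemma integral_g (c : ℝ) {p q : ℝ} (hp : p < -1) (hq : 1 < q) :
    ∫ x in p..q, g c x = ∫ t in Ioo (-1:ℝ) 1, Real.exp (c * Real.sqrt (1 - t ^ 2)) := by
  have hpq : p ≤ q := by linarith
  have hind : g c = (Icc (-1:ℝ) 1).indicator
      (fun t => Real.exp (c * Real.sqrt (1 - t ^ 2))) := by
    funext x
    unfold g
    rw [indicator_apply]
    congr 1
    simp only [eq_iff_iff, mem_Icc]
    rw [sq_le_one_iff_abs_le_one, abs_le]
  rw [intervalIntegral.integral_of_le hpq, hind,
    MeasureTheory.setIntegral_indicator measurableSet_Icc]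
  have : Ioc p q ∩ Icc (-1:ℝ) 1 = Icc (-1:ℝ) 1 := by
    apply inter_eq_right.2
    intro x hx
    simp only [mem_Icc] at hx
    exact ⟨lt_of_lt_of_le hp hx.1, le_trans hx.2 hq.le⟩
  rw [this, MeasureTheory.integral_Icc_eq_integral_Ioo]
set_option maxHeartbeats 1000000 in
lemma sum_approx (c h x0 : ℝ) (hc : 0 ≤ c) (hh : 0 < h) (hx0 : 0 ≤ x0) (hx1 : x0 < h)
    (N : ℕ) (hN : 2 ≤ (N : ℝ) * h) :
    |h * ((∑ i ∈ Finset.range N, g c (x0 - h - i * h)) +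
        ∑ i ∈ Finset.range (N + 1), g c (x0 + i * h))
      - ∫ t in Ioo (-1:ℝ) 1, Real.exp (c * Real.sqrt (1 - t ^ 2))| ≤ 2 * h * Real.exp c := by
  have hFint := g_intervalIntegrable c hc
  have hNh : (0:ℝ) ≤ (N:ℝ) * h := by linarith
  set SL : ℝ := ∑ i ∈ Finset.range N, g c (x0 - h - i * h) with hSL
  set SR : ℝ := ∑ i ∈ Finset.range (N + 1), g c (x0 + i * h) with hSR
  set IR : ℝ := ∫ x in x0..(h * N + x0), g c x with hIR
  set IL : ℝ := ∫ x in (-h * N + (x0 - h))..(x0 - h), g c x with hIL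
  set IM : ℝ := ∫ x in (x0 - h)..x0, g c x with hIM
  -- Right half : antitone comparison
  have hGp : AntitoneOn (fun u : ℝ => g c (h * u + x0)) (Icc (0:ℝ) (0 + N)) := by
    intro u1 hu1 u2 hu2 h12
    exact g_antitoneOn c hc (by simp only [mem_Ici]; nlinarith [hu1.1])
      (by simp only [mem_Ici]; nlinarith [hu2.1]) (by nlinarith)
  have hCoVR : ∫ u in (0:ℝ)..(0 + N), g c (h * u + x0) = h⁻¹ * IR := by
    rw [zero_add, intervalIntegral.integral_comp_mul_add (g c) (ne_of_gt hh) x0]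
    rw [mul_zero, zero_add, smul_eq_mul, hIR]
  have hR1 : IR ≤ h * (∑ i ∈ Finset.range N, g c (x0 + i * h)) := by
    have := hGp.integral_le_sum
    rw [hCoVR] at this
    have h2 : (∑ i ∈ Finset.range N, (fun u : ℝ => g c (h * u + x0)) ((0:ℝ) + i))
        = ∑ i ∈ Finset.range N, g c (x0 + i * h) :=
      Finset.sum_congr rfl fun i _ => by simp only; congr 1; ring
    rw [h2] at this
    calc IR = h * (h⁻¹ * IR) := by field_simp
    _ ≤ h * _ := by apply mul_le_mul_of_nonneg_left this hh.le
  have hR2 : h * (∑ i ∈ Finset.range N, g c (x0 + (i + 1 : ℕ) * h)) ≤ IR := by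
    have := hGp.sum_le_integral
    rw [hCoVR] at this
    have h2 : (∑ i ∈ Finset.range N, (fun u : ℝ => g c (h * u + x0)) ((0:ℝ) + (i + 1 : ℕ)))
        = ∑ i ∈ Finset.range N, g c (x0 + (i + 1 : ℕ) * h) :=
      Finset.sum_congr rfl fun i _ => by simp only; congr 1; push_cast; ring
    rw [h2] at this
    calc h * _ ≤ h * (h⁻¹ * IR) := by apply mul_le_mul_of_nonneg_left this hh.le
    _ = IR := by field_simp
  -- relate SR to the two range-N sums
  have hSRsucc : SR = (∑ i ∈ Finset.range N, g c (x0 + i * h)) + g c (x0 + N * h) := by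
    rw [hSR, Finset.sum_range_succ]
  have hSRsucc' : SR = g c (x0 + 0 * h) + ∑ i ∈ Finset.range N, g c (x0 + (i + 1 : ℕ) * h) := by
    rw [hSR, Finset.sum_range_succ']
    push_cast
    ring
  have hRup : IR ≤ h * SR := by
    rw [hSRsucc]
    nlinarith [g_nonneg c (x0 + N * h), hR1]
  have hRdown : h * SR ≤ IR + h * Real.exp c := by
    rw [hSRsucc']
    nlinarith [g_le c hc (x0 + 0 * h), g_nonneg c (x0 + 0 * h), hR2]
  -- Left half
  have hGm : AntitoneOn (fun u : ℝ => g c (-h * u + (x0 - h))) (Icc (0:ℝ) (0 + N)) := by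
    intro u1 hu1 u2 hu2 h12
    exact g_monotoneOn c hc (by simp only [mem_Iic]; nlinarith [hu2.1])
      (by simp only [mem_Iic]; nlinarith [hu1.1]) (by nlinarith)
  have hCoVL : ∫ u in (0:ℝ)..(0 + N), g c (-h * u + (x0 - h)) = h⁻¹ * IL := by
    rw [zero_add, intervalIntegral.integral_comp_mul_add (g c) (by intro hcon; linarith [neg_eq_zero.1 hcon] : -h ≠ 0) (x0 - h)]
    rw [mul_zero, zero_add, intervalIntegral.integral_symm, hIL, smul_eq_mul]
    rw [inv_neg]
    ring
  have hL1 : IL ≤ h * SL := by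
    have := hGm.integral_le_sum
    rw [hCoVL] at this
    have h2 : (∑ i ∈ Finset.range N, (fun u : ℝ => g c (-h * u + (x0 - h))) ((0:ℝ) + i)) = SL :=
      Finset.sum_congr rfl fun i _ => by simp only; congr 1; ring
    rw [h2] at this
    calc IL = h * (h⁻¹ * IL) := by field_simp
    _ ≤ h * SL := by apply mul_le_mul_of_nonneg_left this hh.le
  have hL2 : h * (∑ i ∈ Finset.range N, g c (x0 - h - (i + 1 : ℕ) * h)) ≤ IL := by
    have := hGm.sum_le_integral
    rw [hCoVL] at this
    have h2 : (∑ i ∈ Finset.range N, (fun u : ℝ => g c (-h * u + (x0 - h))) ((0:ℝ) + (i + 1 : ℕ)))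
        = ∑ i ∈ Finset.range N, g c (x0 - h - (i + 1 : ℕ) * h) :=
      Finset.sum_congr rfl fun i _ => by simp only; congr 1; push_cast; ring
    rw [h2] at this
    calc h * _ ≤ h * (h⁻¹ * IL) := by apply mul_le_mul_of_nonneg_left this hh.le
    _ = IL := by field_simp
  have htel : SL - (∑ i ∈ Finset.range N, g c (x0 - h - (i + 1 : ℕ) * h))
      = g c (x0 - h - (0:ℕ) * h) - g c (x0 - h - N * h) := by
    rw [hSL, ← Finset.sum_sub_distrib]
    exact Finset.sum_range_sub' (fun i : ℕ => g c (x0 - h - i * h)) N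
  have hLdown : h * SL ≤ IL + h * Real.exp c := by
    have h0 : g c (x0 - h - (0:ℕ) * h) ≤ Real.exp c := g_le c hc _
    have hN0 : 0 ≤ g c (x0 - h - N * h) := g_nonneg c _
    nlinarith [hL2]
  -- middle
  have hM0 : 0 ≤ IM := intervalIntegral.integral_nonneg (by linarith) (fun x _ => g_nonneg c x)
  have hM1 : IM ≤ h * Real.exp c := by
    have hle : IM ≤ ∫ x in (x0 - h)..x0, (fun _ : ℝ => Real.exp c) x :=
      intervalIntegral.integral_mono_on (by linarith) (hFint _ _)
        intervalIntegrable_const (fun x _ => g_le c hc x)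
    rw [intervalIntegral.integral_const, smul_eq_mul] at hle
    nlinarith [hle]
  -- total
  have htot : IL + IM + IR = ∫ t in Ioo (-1:ℝ) 1, Real.exp (c * Real.sqrt (1 - t ^ 2)) := by
    rw [hIL, hIM, hIR]
    rw [intervalIntegral.integral_add_adjacent_intervals (hFint _ _) (hFint _ _)]
    rw [intervalIntegral.integral_add_adjacent_intervals (hFint _ _) (hFint _ _)]
    exact integral_g c (by nlinarith) (by nlinarith)
  rw [← htot, abs_le]
  constructor <;> nlinarith [hRup, hRdown, hL1, hLdown, hM0, hM1, Real.exp_pos c]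

lemma J_lower (c δ : ℝ) (hc : 0 ≤ c) (hδ0 : 0 < δ) (hδ1 : δ ≤ 1) :
    2 * δ * Real.exp (c * (1 - δ ^ 2)) ≤
      ∫ t in Ioo (-1:ℝ) 1, Real.exp (c * Real.sqrt (1 - t ^ 2)) := by
  have hcont : Continuous (fun t : ℝ => Real.exp (c * Real.sqrt (1 - t ^ 2))) := by
    fun_prop
  have hFi : IntegrableOn (fun t : ℝ => Real.exp (c * Real.sqrt (1 - t ^ 2)))
      (Ioo (-1:ℝ) 1) volume :=
    (hcont.integrableOn_Icc).mono_set Ioo_subset_Icc_self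
  have h1 : 2 * δ * Real.exp (c * (1 - δ ^ 2)) ≤
      ∫ t in Ioo (-δ) δ, Real.exp (c * Real.sqrt (1 - t ^ 2)) := by
    have := MeasureTheory.setIntegral_ge_of_const_le (μ := volume)
      (s := Ioo (-δ) δ) (f := fun t : ℝ => Real.exp (c * Real.sqrt (1 - t ^ 2)))
      (c := Real.exp (c * (1 - δ ^ 2))) measurableSet_Ioo
      (by rw [Real.volume_Ioo]; exact ENNReal.ofReal_ne_top)
      (fun x hx => by
        simp only [mem_Ioo] at hx
        apply Real.exp_le_exp.2
        apply mul_le_mul_of_nonneg_left _ hc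
        have hx2 : x ^ 2 ≤ δ ^ 2 := sq_le_sq' (by linarith) (by linarith)
        have h1x : 0 ≤ 1 - x ^ 2 := by nlinarith
        have : (1 - x ^ 2) = Real.sqrt ((1 - x ^ 2) ^ 2) := (Real.sqrt_sq h1x).symm
        have hsq : Real.sqrt ((1 - x ^ 2) ^ 2) ≤ Real.sqrt (1 - x ^ 2) :=
          Real.sqrt_le_sqrt (by nlinarith)
        nlinarith)
      (hFi.mono_set (Ioo_subset_Ioo (by linarith) hδ1))
    rw [Real.volume_real_Ioo_of_le (by linarith), smul_eq_mul] at this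
    nlinarith [this]
  have h2 : (∫ t in Ioo (-δ) δ, Real.exp (c * Real.sqrt (1 - t ^ 2))) ≤
      ∫ t in Ioo (-1:ℝ) 1, Real.exp (c * Real.sqrt (1 - t ^ 2)) := by
    apply MeasureTheory.setIntegral_mono_set hFi
      (Filter.Eventually.of_forall fun x => (Real.exp_pos _).le)
      ((Ioo_subset_Ioo (by linarith) hδ1).eventuallyLE)
  linarith

lemma sqrt_tendsto_atTop : Tendsto Real.sqrt atTop atTop := by
  apply tendsto_atTop_atTop.2
  intro b
  refine ⟨b ^ 2, fun x hx => ?_⟩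
  calc b ≤ |b| := le_abs_self b
  _ = Real.sqrt (b ^ 2) := (Real.sqrt_sq_eq_abs b).symm
  _ ≤ Real.sqrt x := Real.sqrt_le_sqrt hx


end RSAux

open RSAux

/-- The finite sum `S_n = Σ_{l ∈ ℤ, (ml+k)² ≤ 4n} exp(a√n √(1 - (ml+k)²/(4n)))`,
written as a `tsum` over `ℤ` of a finitely supported function. -/
noncomputable def riemannSum (m k : ℤ) (a : ℝ) (n : ℕ) : ℝ :=
  ∑' l : ℤ, if (m * l + k) ^ 2 ≤ 4 * (n : ℤ) then
      Real.exp (a * Real.sqrt n * Real.sqrt (1 - ((m * l + k : ℤ) : ℝ) ^ 2 / (4 * n)))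
    else 0

/-- The integral `J_n = ∫_{-1}^{1} exp(a√n √(1 - t²)) dt` (Lebesgue integral
over the interval `(-1, 1)`). -/
noncomputable def riemannIntegral (a : ℝ) (n : ℕ) : ℝ :=
  ∫ t in Set.Ioo (-1 : ℝ) 1, Real.exp (a * Real.sqrt n * Real.sqrt (1 - t ^ 2))

set_option maxHeartbeats 1000000 in
lemma RSAux.main_est (m k : ℤ) (hm : 1 ≤ m) (a : ℝ) (ha : 0 < a) (n : ℕ) (hn : 16 ≤ n) :
    |(((m : ℝ) / (2 * Real.sqrt n)) * riemannSum m k a n) / riemannIntegral a n - 1|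
      ≤ ((m : ℝ) * Real.exp a / 2) / Real.sqrt (Real.sqrt n) := by
  have hnR : (16:ℝ) ≤ (n:ℝ) := by exact_mod_cast hn
  set s := Real.sqrt (n:ℝ) with hs
  have hs4 : 4 ≤ s := by
    rw [hs, show (4:ℝ) = Real.sqrt 16 by
      rw [show (16:ℝ) = 4 ^ 2 by norm_num, Real.sqrt_sq (by norm_num)]]
    exact Real.sqrt_le_sqrt hnR
  have hs0 : 0 < s := by linarith
  have hsn : s ^ 2 = (n:ℝ) := Real.sq_sqrt (Nat.cast_nonneg n)
  have hmR : (1:ℝ) ≤ (m:ℝ) := by exact_mod_cast hm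
  have hm0 : (0:ℝ) < (m:ℝ) := by linarith
  set h := (m : ℝ) / (2 * s) with hh'
  have hh : 0 < h := div_pos hm0 (by linarith)
  set c := a * s with hc'
  have hc : 0 ≤ c := by positivity
  set l₀ : ℤ := -(k / m) with hl₀
  set r : ℤ := m * l₀ + k with hr'
  have hrmod : r = k % m := by rw [hr', hl₀, Int.emod_def]; ring
  have hr0 : 0 ≤ r := hrmod ▸ Int.emod_nonneg k (by omega)
  have hrm : r < m := hrmod ▸ Int.emod_lt_of_pos k (by omega)
  set x0 := (r : ℝ) / (2 * s) with hx0'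
  have hr0R : (0:ℝ) ≤ (r:ℝ) := by exact_mod_cast hr0
  have hrmR : (r:ℝ) < (m:ℝ) := by exact_mod_cast hrm
  have hx0 : 0 ≤ x0 := by positivity
  have hx1 : x0 < h := by
    rw [hx0', hh']
    exact div_lt_div_of_pos_right hrmR (by linarith) |>.trans_le (le_refl _)
  -- term identification
  have h2s : (2 * s) ^ 2 = 4 * (n:ℝ) := by rw [mul_pow, hsn]; norm_num
  have hn0 : (0:ℝ) < 4 * (n:ℝ) := by linarith
  have hterm : ∀ l : ℤ, (if (m * l + k) ^ 2 ≤ 4 * (n : ℤ) then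
      Real.exp (a * Real.sqrt n * Real.sqrt (1 - ((m * l + k : ℤ) : ℝ) ^ 2 / (4 * n))) else 0)
      = g c (((m * l + k : ℤ) : ℝ) / (2 * s)) := by
    intro l
    unfold g
    have hX2 : (((m * l + k : ℤ) : ℝ) / (2 * s)) ^ 2
        = ((m * l + k : ℤ) : ℝ) ^ 2 / (4 * (n:ℝ)) := by rw [div_pow, h2s]
    have hcond : ((m * l + k) ^ 2 ≤ 4 * (n:ℤ)) ↔ ((((m * l + k : ℤ) : ℝ) / (2 * s)) ^ 2 ≤ 1) := by
      rw [hX2, div_le_one hn0]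
      constructor
      · intro hle; exact_mod_cast hle
      · intro hle; exact_mod_cast hle
    have hbr : Real.exp (a * Real.sqrt n * Real.sqrt (1 - ((m * l + k : ℤ) : ℝ) ^ 2 / (4 * n)))
        = Real.exp (c * Real.sqrt (1 - (((m * l + k : ℤ) : ℝ) / (2 * s)) ^ 2)) := by
      rw [hX2, hc', hs]
    by_cases hcc : (m * l + k) ^ 2 ≤ 4 * (n:ℤ)
    · rw [if_pos hcc, if_pos (hcond.1 hcc), hbr]
    · rw [if_neg hcc, if_neg (fun hb => hcc (hcond.2 hb))]
  -- support
  have hsupp : ∀ l : ℤ, l ∉ Finset.Icc (l₀ - (n:ℤ)) (l₀ + (n:ℤ)) →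
      (if (m * l + k) ^ 2 ≤ 4 * (n : ℤ) then
        Real.exp (a * Real.sqrt n * Real.sqrt (1 - ((m * l + k : ℤ) : ℝ) ^ 2 / (4 * n)))
      else 0) = 0 := by
    intro l hl
    rw [Finset.mem_Icc, not_and_or, not_le, not_le] at hl
    have h16 : (16 : ℤ) ≤ (n:ℤ) := by exact_mod_cast hn
    have hkey : ¬ ((m * l + k) ^ 2 ≤ 4 * (n : ℤ)) := by
      rcases hl with hl | hl
      · have hd : l - l₀ ≤ -((n:ℤ) + 1) := by omega
        have h1 : m * (l - l₀) ≤ m * (-((n:ℤ) + 1)) :=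
          mul_le_mul_of_nonneg_left hd (by omega)
        have h2 : m * l + k = r + m * (l - l₀) := by rw [hr']; ring
        have hmn : (n:ℤ) + 1 ≤ m * ((n:ℤ) + 1) := le_mul_of_one_le_left (by omega) hm
        have h3 : m * l + k ≤ -((n:ℤ) + 1) := by nlinarith
        intro hcon
        nlinarith [sq_nonneg (m * l + k + ((n:ℤ) + 1))]
      · have hd : (n:ℤ) + 1 ≤ l - l₀ := by omega
        have h1 : m * ((n:ℤ) + 1) ≤ m * (l - l₀) :=
          mul_le_mul_of_nonneg_left hd (by omega)
        have h2 : m * l + k = r + m * (l - l₀) := by rw [hr']; ring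
        have hmn : (n:ℤ) + 1 ≤ m * ((n:ℤ) + 1) := le_mul_of_one_le_left (by omega) hm
        have h3 : (n:ℤ) + 1 ≤ m * l + k := by nlinarith
        intro hcon
        nlinarith [sq_nonneg (m * l + k - ((n:ℤ) + 1))]
    rw [if_neg hkey]
  -- tsum to finite sum
  have hsum1 : riemannSum m k a n
      = ∑ l ∈ Finset.Icc (l₀ - (n:ℤ)) (l₀ + (n:ℤ)), g c (((m * l + k : ℤ) : ℝ) / (2 * s)) := by
    unfold riemannSum
    rw [tsum_eq_sum hsupp]
    exact Finset.sum_congr rfl fun l _ => hterm l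
  have hmap : Finset.Icc (l₀ - (n:ℤ)) (l₀ + (n:ℤ))
      = Finset.map ⟨fun i : ℕ => l₀ - (n:ℤ) + i, show Function.Injective (fun i : ℕ => l₀ - (n:ℤ) + i) from fun a b hab => Nat.cast_inj.1 (add_left_cancel hab)⟩
          (Finset.range (2 * n + 1)) := by
    ext l
    simp only [Finset.mem_Icc, Finset.mem_map, Finset.mem_range, Function.Embedding.coeFn_mk]
    constructor
    · intro hl
      exact ⟨(l - (l₀ - (n:ℤ))).toNat, by omega, by omega⟩
    · rintro ⟨i, hi, rfl⟩
      omega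
  have hX : ∀ i : ℕ, ((m * (l₀ - (n:ℤ) + i) + k : ℤ) : ℝ) / (2 * s) = x0 + ((i:ℝ) - (n:ℝ)) * h := by
    intro i
    have he : (m * (l₀ - (n:ℤ) + i) + k : ℤ) = r + ((i:ℤ) - (n:ℤ)) * m := by rw [hr']; ring
    rw [he, hx0', hh']
    push_cast
    ring
  have hsum2 : riemannSum m k a n
      = ∑ i ∈ Finset.range (2 * n + 1), g c (x0 + ((i:ℝ) - (n:ℝ)) * h) := by
    rw [hsum1, hmap, Finset.sum_map]
    exact Finset.sum_congr rfl fun i _ => by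
      simp only [Function.Embedding.coeFn_mk]
      rw [hX i]
  have hsplit : riemannSum m k a n
      = (∑ i ∈ Finset.range n, g c (x0 - h - (i:ℝ) * h))
        + ∑ i ∈ Finset.range (n + 1), g c (x0 + (i:ℝ) * h) := by
    rw [hsum2, show 2 * n + 1 = n + (n + 1) by ring, Finset.sum_range_add]
    congr 1
    · rw [← Finset.sum_range_reflect (fun i : ℕ => g c (x0 + ((i:ℝ) - (n:ℝ)) * h)) n]
      apply Finset.sum_congr rfl
      intro i hi
      rw [Finset.mem_range] at hi
      congr 1
      rw [Nat.cast_sub (by omega : i ≤ n - 1), Nat.cast_sub (by omega : 1 ≤ n), Nat.cast_one]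
      ring
    · apply Finset.sum_congr rfl
      intro i hi
      congr 1
      push_cast
      ring
  -- apply the main comparison
  have hNh : 2 ≤ (n:ℝ) * h := by
    rw [hh']
    rw [mul_div_assoc']
    rw [le_div_iff₀ (by linarith : (0:ℝ) < 2 * s)]
    nlinarith
  have hkey := sum_approx c h x0 hc hh hx0 hx1 n hNh
  have hJ : riemannIntegral a n = ∫ t in Ioo (-1:ℝ) 1, Real.exp (c * Real.sqrt (1 - t ^ 2)) := by
    unfold riemannIntegral
    rw [hc', hs]
  rw [← hsplit, ← hJ] at hkey
  -- lower bound for the integral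
  set δ := (Real.sqrt s)⁻¹ with hδ'
  have hss : 0 < Real.sqrt s := Real.sqrt_pos.2 hs0
  have hs1 : 1 ≤ Real.sqrt s := by
    rw [show (1:ℝ) = Real.sqrt 1 by simp]
    exact Real.sqrt_le_sqrt (by linarith)
  have hδ0 : 0 < δ := by positivity
  have hδ1 : δ ≤ 1 := by
    rw [hδ']
    exact inv_le_one_of_one_le₀ hs1
  have hδ2 : δ ^ 2 = s⁻¹ := by rw [hδ', inv_pow, Real.sq_sqrt hs0.le]
  have harg : c * (1 - δ ^ 2) = c - a := by
    rw [hδ2, hc']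
    field_simp
  have hJlb : 2 * δ * Real.exp (c - a) ≤ riemannIntegral a n := by
    have := J_lower c δ hc hδ0 hδ1
    rw [harg, ← hJ] at this
    exact this
  have hJpos : 0 < riemannIntegral a n := lt_of_lt_of_le (by positivity) hJlb
  -- final computation
  have hratio : |h * riemannSum m k a n / riemannIntegral a n - 1|
      = |h * riemannSum m k a n - riemannIntegral a n| / riemannIntegral a n := by
    rw [div_sub_one hJpos.ne', abs_div, abs_of_pos hJpos]
  rw [hratio]
  have hstep : |h * riemannSum m k a n - riemannIntegral a n| / riemannIntegral a n
      ≤ (2 * h * Real.exp c) / (2 * δ * Real.exp (c - a)) :=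
    div_le_div₀ (by positivity) hkey (by positivity) hJlb
  refine hstep.trans (le_of_eq ?_)
  rw [hh', hδ', Real.exp_sub]
  rw [show Real.sqrt (Real.sqrt (n:ℝ)) = Real.sqrt s by rw [hs]]
  have hsqs : Real.sqrt s * Real.sqrt s = s := Real.mul_self_sqrt hs0.le
  field_simp
  linear_combination hsqs

/-- For integers `m ≥ 1`, `k` and a real `a > 0`, the Riemann sum `(m/(2√n)) S_n`
is asymptotic to the integral `J_n` as `n → ∞`. -/
theorem riemannSum_asymptotic (m k : ℤ) (hm : 1 ≤ m) (a : ℝ) (ha : 0 < a) :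
    Tendsto (fun n : ℕ =>
        (((m : ℝ) / (2 * Real.sqrt n)) * riemannSum m k a n) / riemannIntegral a n)
      atTop (nhds 1) := by
  have hev : ∀ᶠ n : ℕ in atTop,
      |(((m : ℝ) / (2 * Real.sqrt n)) * riemannSum m k a n) / riemannIntegral a n - 1|
        ≤ ((m : ℝ) * Real.exp a / 2) / Real.sqrt (Real.sqrt n) :=
    Filter.eventually_atTop.2 ⟨16, fun n hn => RSAux.main_est m k hm a ha n hn⟩
  have hb : Tendsto (fun n : ℕ => ((m : ℝ) * Real.exp a / 2) / Real.sqrt (Real.sqrt n))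
      atTop (nhds 0) := by
    apply Filter.Tendsto.div_atTop (tendsto_const_nhds)
    exact (RSAux.sqrt_tendsto_atTop.comp RSAux.sqrt_tendsto_atTop).comp
      tendsto_natCast_atTop_atTop
  have h0 : Tendsto (fun n : ℕ =>
      (((m : ℝ) / (2 * Real.sqrt n)) * riemannSum m k a n) / riemannIntegral a n - 1)
      atTop (nhds 0) :=
    squeeze_zero_norm' (by simpa using hev) hb
  have := h0.add (tendsto_const_nhds : Tendsto (fun _ : ℕ => (1:ℝ)) atTop (nhds 1))
  simpa using this
end

section
/- Let a > 0 be a real number. Then ∫_{−1}^{1} e^{λ a √(1 − t²)} dt is asymptotic to e^{aλ} · √(2π/(aλ)) as λ → ∞; that is, the ratio (∫_{−1}^{1} e^{λ a √(1−t²)} dt) · e^{−aλ} · √(aλ/(2π)) tends to 1 as λ → +∞. In particular, with a = 4π/3 and λ = √n, the integral J_n = ∫_{−1}^1 e^{(4π√n/3)√(1−t²)} dt is asymptotic to (√3/(√2 · n^{1/4})) e^{4π√n/3} as n → ∞. -/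
open Filter Real Set MeasureTheory

private lemma my_sqrt_one_sub_le {x : ℝ} (hx0 : 0 ≤ x) (hx1 : x ≤ 1) :
    Real.sqrt (1 - x) ≤ 1 - x / 2 := by
  have h : 1 - x ≤ (1 - x / 2) ^ 2 := by nlinarith
  calc Real.sqrt (1 - x) ≤ Real.sqrt ((1 - x / 2) ^ 2) := Real.sqrt_le_sqrt h
    _ = 1 - x / 2 := Real.sqrt_sq (by linarith)

private lemma my_sqrt_one_sub_eq {u : ℝ} (hu : u ≤ 1) :
    Real.sqrt (1 - u) - 1 = -u / (1 + Real.sqrt (1 - u)) := by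
  have h0 : (0:ℝ) ≤ 1 - u := by linarith
  have hs : 0 ≤ Real.sqrt (1 - u) := Real.sqrt_nonneg _
  have hpos : (0:ℝ) < 1 + Real.sqrt (1 - u) := by linarith
  have hsq : Real.sqrt (1 - u) ^ 2 = 1 - u := Real.sq_sqrt h0
  field_simp
  nlinarith [hsq]

private lemma my_step_A (c : ℝ) (hc : 0 < c) :
    (∫ t in Set.Ioo (-1 : ℝ) 1, Real.exp (c * Real.sqrt (1 - t ^ 2))) * Real.exp (-c)
      * Real.sqrt c
    = ∫ s, (Set.Ioo (-Real.sqrt c) (Real.sqrt c)).indicator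
        (fun s => Real.exp (c * (Real.sqrt (1 - (s / Real.sqrt c) ^ 2) - 1))) s := by
  have hsc : 0 < Real.sqrt c := Real.sqrt_pos.mpr hc
  have h1 : (∫ t in Set.Ioo (-1 : ℝ) 1, Real.exp (c * Real.sqrt (1 - t ^ 2))) * Real.exp (-c)
      = ∫ t in Set.Ioo (-1 : ℝ) 1, Real.exp (c * (Real.sqrt (1 - t ^ 2) - 1)) := by
    rw [← MeasureTheory.integral_mul_const]
    congr 1; funext t
    rw [← Real.exp_add]; ring_nf
  rw [h1, ← MeasureTheory.integral_indicator measurableSet_Ioo]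
  have h2 := MeasureTheory.Measure.integral_comp_div
    (g := fun t => (Set.Ioo (-1:ℝ) 1).indicator
        (fun t => Real.exp (c * (Real.sqrt (1 - t ^ 2) - 1))) t)
    (Real.sqrt c)
  rw [abs_of_pos hsc, smul_eq_mul] at h2
  rw [mul_comm] at h2
  rw [← h2]
  congr 1; funext s
  have hmem : s / Real.sqrt c ∈ Set.Ioo (-1:ℝ) 1 ↔ s ∈ Set.Ioo (-Real.sqrt c) (Real.sqrt c) := by
    simp only [Set.mem_Ioo, lt_div_iff₀ hsc, div_lt_iff₀ hsc]
    constructor <;> rintro ⟨u, v⟩ <;> constructor <;> nlinarith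
  by_cases hs : s ∈ Set.Ioo (-Real.sqrt c) (Real.sqrt c)
  · rw [Set.indicator_of_mem (hmem.mpr hs), Set.indicator_of_mem hs]
  · rw [Set.indicator_of_notMem (fun h => hs (hmem.mp h)), Set.indicator_of_notMem hs]

private lemma my_step_B :
    Tendsto (fun c : ℝ => ∫ s, (Set.Ioo (-Real.sqrt c) (Real.sqrt c)).indicator
        (fun s => Real.exp (c * (Real.sqrt (1 - (s / Real.sqrt c) ^ 2) - 1))) s)
      atTop (nhds (Real.sqrt (2 * π))) := by
  have hint : ∫ s : ℝ, Real.exp (-(1/2 : ℝ) * s ^ 2) = Real.sqrt (2 * π) := by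
    rw [integral_gaussian, show π / (1/2 : ℝ) = 2 * π by ring]
  rw [← hint]
  apply MeasureTheory.tendsto_integral_filter_of_dominated_convergence
    (bound := fun s : ℝ => Real.exp (-(1/2 : ℝ) * s ^ 2))
  · filter_upwards with c
    apply Measurable.aestronglyMeasurable
    apply Measurable.indicator _ measurableSet_Ioo
    fun_prop
  · filter_upwards [eventually_gt_atTop (0:ℝ)] with c hc
    filter_upwards with s
    rw [Real.norm_eq_abs,
      abs_of_nonneg (Set.indicator_nonneg (fun _ _ => (Real.exp_pos _).le) _)]
    by_cases hs : s ∈ Set.Ioo (-Real.sqrt c) (Real.sqrt c)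
    · rw [Set.indicator_of_mem hs]
      obtain ⟨hl, hr⟩ := hs
      have hx : (s / Real.sqrt c) ^ 2 = s ^ 2 / c := by
        rw [div_pow, Real.sq_sqrt hc.le]
      have hs2 : s ^ 2 < c := by
        have := abs_lt.mpr ⟨hl, hr⟩
        nlinarith [Real.sq_sqrt hc.le, abs_nonneg s, sq_abs s]
      have h0 : 0 ≤ s ^ 2 / c := by positivity
      have h1 : s ^ 2 / c ≤ 1 := by rw [div_le_one hc]; linarith
      have key : c * (Real.sqrt (1 - s ^ 2 / c) - 1) ≤ -(1/2) * s ^ 2 := by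
        have := my_sqrt_one_sub_le h0 h1
        have h2 : Real.sqrt (1 - s ^ 2 / c) - 1 ≤ -(s ^ 2 / c) / 2 := by linarith
        calc c * (Real.sqrt (1 - s ^ 2 / c) - 1) ≤ c * (-(s ^ 2 / c) / 2) := by
              exact mul_le_mul_of_nonneg_left h2 hc.le
          _ = -(1/2) * s ^ 2 := by field_simp
      rw [hx]
      exact Real.exp_le_exp.mpr key
    · rw [Set.indicator_of_notMem hs]
      positivity
  · exact integrable_exp_neg_mul_sq (by norm_num)
  · refine Filter.Eventually.of_forall fun s => ?_
    have h1 : Tendsto (fun c : ℝ => s ^ 2 / c) atTop (nhds 0) := by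
      simpa [div_eq_mul_inv] using tendsto_inv_atTop_zero.const_mul (s ^ 2)
    have h2 : Tendsto (fun c : ℝ => Real.sqrt (1 - s ^ 2 / c)) atTop (nhds 1) := by
      have h0 : Tendsto (fun c : ℝ => 1 - s ^ 2 / c) atTop (nhds 1) := by
        simpa using (tendsto_const_nhds (x := (1:ℝ))).sub h1
      have := (Real.continuous_sqrt.tendsto 1).comp h0
      rw [Real.sqrt_one] at this
      exact this
    have h3 : Tendsto (fun c : ℝ => -s ^ 2 / (1 + Real.sqrt (1 - s ^ 2 / c)))
        atTop (nhds (-(1/2) * s ^ 2)) := by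
      have : Tendsto (fun c : ℝ => -s ^ 2 / (1 + Real.sqrt (1 - s ^ 2 / c)))
          atTop (nhds (-s ^ 2 / (1 + 1))) := Tendsto.div (tendsto_const_nhds (x := -s ^ 2)) (tendsto_const_nhds.add h2)
        (by norm_num : (1:ℝ) + 1 ≠ 0)
      convert this using 2
      ring
    have h4 := (Real.continuous_exp.tendsto _).comp h3
    apply Tendsto.congr' _ h4
    filter_upwards [eventually_ge_atTop (s ^ 2 + 1)] with c hcge
    have hc0 : (0:ℝ) < c := by nlinarith [sq_nonneg s]
    have hs2 : s ^ 2 < c := by linarith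
    have hmem : s ∈ Set.Ioo (-Real.sqrt c) (Real.sqrt c) := by
      have : |s| < Real.sqrt c := by
        rw [← Real.sqrt_sq_eq_abs]
        exact Real.sqrt_lt_sqrt (sq_nonneg s) hs2
      exact Set.mem_Ioo.mpr (abs_lt.mp this)
    rw [Function.comp_apply, Set.indicator_of_mem hmem]
    have hx : (s / Real.sqrt c) ^ 2 = s ^ 2 / c := by
      rw [div_pow, Real.sq_sqrt hc0.le]
    have h1le : s ^ 2 / c ≤ 1 := by rw [div_le_one hc0]; linarith
    rw [hx, my_sqrt_one_sub_eq h1le]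
    congr 1
    field_simp

private lemma my_key : Tendsto (fun c : ℝ =>
    (∫ t in Set.Ioo (-1 : ℝ) 1, Real.exp (c * Real.sqrt (1 - t ^ 2))) * Real.exp (-c)
      * Real.sqrt (c / (2 * π))) atTop (nhds 1) := by
  have hC : Tendsto (fun c : ℝ =>
      (∫ t in Set.Ioo (-1 : ℝ) 1, Real.exp (c * Real.sqrt (1 - t ^ 2))) * Real.exp (-c)
        * Real.sqrt c) atTop (nhds (Real.sqrt (2 * π))) := by
    apply Tendsto.congr' _ my_step_B
    filter_upwards [eventually_gt_atTop (0:ℝ)] with c hc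
    exact (my_step_A c hc).symm
  have h2π : Real.sqrt (2 * π) ≠ 0 := by positivity
  have h := hC.div_const (Real.sqrt (2 * π))
  rw [div_self h2π] at h
  apply Tendsto.congr' _ h
  filter_upwards [eventually_ge_atTop (0:ℝ)] with c hc
  rw [Real.sqrt_div hc, mul_div_assoc]

/-- For `a > 0`, `∫_{-1}^{1} e^{λ a √(1-t²)} dt ~ e^{aλ} √(2π/(aλ))` as `λ → ∞`;
in particular (taking `a = 4π/3`, `λ = √n`), the integral
`J_n = ∫_{-1}^{1} e^{(4π√n/3)√(1-t²)} dt` is asymptotic to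
`(√3/(√2 n^{1/4})) e^{4π√n/3}` as `n → ∞`. -/
theorem integral_exp_sqrt_one_sub_sq_asymptotic (a : ℝ) (ha : 0 < a) :
    Tendsto (fun lam : ℝ =>
        (∫ t in Set.Ioo (-1 : ℝ) 1, Real.exp (lam * a * Real.sqrt (1 - t ^ 2))) *
          Real.exp (-(a * lam)) * Real.sqrt (a * lam / (2 * Real.pi)))
      atTop (nhds 1) ∧
    Tendsto (fun n : ℕ =>
        (∫ t in Set.Ioo (-1 : ℝ) 1,
            Real.exp (4 * Real.pi * Real.sqrt n / 3 * Real.sqrt (1 - t ^ 2))) /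
          (Real.sqrt 3 / (Real.sqrt 2 * (n : ℝ) ^ ((1 : ℝ) / 4)) *
            Real.exp (4 * Real.pi * Real.sqrt n / 3)))
      atTop (nhds 1) := by
  constructor
  · have hmap : Tendsto (fun lam : ℝ => a * lam) atTop atTop :=
      Tendsto.const_mul_atTop ha tendsto_id
    have h := my_key.comp hmap
    apply h.congr
    intro lam
    simp only [Function.comp_apply, mul_comm a lam]
  · have hsqrtN : Tendsto (fun n : ℕ => Real.sqrt n) atTop atTop := by
      apply tendsto_atTop_atTop.mpr
      intro b
      refine ⟨⌈b ^ 2⌉₊, fun n hn => ?_⟩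
      have : b ^ 2 ≤ (n : ℝ) := le_trans (Nat.le_ceil _) (by exact_mod_cast hn)
      calc b ≤ |b| := le_abs_self b
        _ = Real.sqrt (b ^ 2) := (Real.sqrt_sq_eq_abs b).symm
        _ ≤ Real.sqrt n := Real.sqrt_le_sqrt this
    have hmap : Tendsto (fun n : ℕ => 4 * π * Real.sqrt n / 3) atTop atTop :=
      Tendsto.atTop_div_const (by norm_num)
        (Tendsto.const_mul_atTop (by positivity) hsqrtN)
    have h := my_key.comp hmap
    apply Tendsto.congr' _ h
    filter_upwards [eventually_ge_atTop 1] with n hn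
    have hn0 : (0:ℝ) < (n:ℝ) := by exact_mod_cast Nat.lt_of_lt_of_le Nat.zero_lt_one hn
    have hq : (n : ℝ) ^ ((1:ℝ)/4) = Real.sqrt (Real.sqrt n) := by
      rw [Real.sqrt_eq_rpow, Real.sqrt_eq_rpow, ← Real.rpow_mul hn0.le]
      norm_num
    have hD : Real.sqrt ((4 * π * Real.sqrt n / 3) / (2 * π))
        = Real.sqrt 2 * (n : ℝ) ^ ((1:ℝ)/4) / Real.sqrt 3 := by
      rw [show (4 * π * Real.sqrt n / 3) / (2 * π) = 2 * Real.sqrt n / 3 by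
        field_simp [Real.pi_ne_zero]; ring]
      rw [Real.sqrt_div (by positivity) 3, Real.sqrt_mul (by norm_num : (0:ℝ) ≤ 2), hq]
    simp only [Function.comp_apply]
    rw [hD]
    set I := ∫ t in Set.Ioo (-1 : ℝ) 1,
        Real.exp (4 * π * Real.sqrt n / 3 * Real.sqrt (1 - t ^ 2)) with hI
    set E := Real.exp (4 * π * Real.sqrt n / 3) with hE
    have hEne : E ≠ 0 := Real.exp_ne_zero _
    have h3ne : Real.sqrt 3 ≠ 0 := by positivity
    have hqne : Real.sqrt 2 * (n : ℝ) ^ ((1:ℝ)/4) ≠ 0 := by positivity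
    rw [show Real.exp (-(4 * π * Real.sqrt n / 3)) = E⁻¹ by rw [hE, Real.exp_neg]]
    have hne : Real.sqrt 3 / (Real.sqrt 2 * (n : ℝ) ^ ((1:ℝ)/4)) * E ≠ 0 := by
      positivity
    rw [eq_div_iff hne]
    field_simp
end
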